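/- The operators α_n = Σ_{k∈ℤ'} ψ_{k−n} ψ*_k (n ∈ ℤ \ {0}) acting on the charged fermionic Fock space satisfy the Heisenberg relations α_m α_n − α_n α_m = m δ_{n,−m} for all m, n ∈ ℤ \ {0}. -/

import Mathlib

noncomputable section
open scoped Classical

/-- A subset `S ⊂ ℤ' = ℤ + ½` (encoded by `k ↦ k + ½`, so that `ℤ'_{<0}` corresponds to
`{k | k < 0}`) is admissible if both `S \ ℤ'_{<0}` and `ℤ'_{<0} \ S` are finite. -/
def Admissible (S : Set ℤ) : Prop :=
  (S \ {k : ℤ | k < 0}).Finite ∧ ({k : ℤ | k < 0} \ S).Finite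

/-- Index set for the basis `v_S` of the fermionic Fock space `Λ^{∞/2}V`. -/
def FockIndex : Type := {S : Set ℤ // Admissible S}

/-- The fermionic Fock space `Λ^{∞/2}V`, realized with its orthonormal basis `{v_S}`. -/
abbrev Fock : Type := FockIndex →₀ ℝ

/-- The basis vector `v_S = s₁ ∧ s₂ ∧ ⋯` for `S = {s₁ > s₂ > ⋯}`. -/
def vbasis (S : FockIndex) : Fock := Finsupp.single S 1

lemma finite_gt (S : FockIndex) (k : ℤ) : (S.1 ∩ Set.Ioi k).Finite := by
  apply Set.Finite.subset (S.2.1.union (Set.finite_Icc k 0))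
  rintro s ⟨hs, _⟩
  rcases lt_or_ge s 0 with h | h
  · exact Or.inr ⟨le_of_lt (by simpa using ‹s ∈ Set.Ioi k›), le_of_lt h⟩
  · exact Or.inl ⟨hs, not_lt.mpr h⟩

/-- The number of elements of `S` greater than `k`; the sign of moving `k` into `v_S`
is `(−1)` to this power. -/
def signCount (S : FockIndex) (k : ℤ) : ℕ := (finite_gt S k).toFinset.card

lemma adm_insert (S : FockIndex) (k : ℤ) : Admissible (insert k S.1) := by
  constructor
  · apply Set.Finite.subset (S.2.1.union (Set.finite_singleton k))
    rintro s ⟨hs, hneg⟩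
    rcases hs with rfl | hs
    · exact Or.inr rfl
    · exact Or.inl ⟨hs, hneg⟩
  · exact S.2.2.subset (by intro s hs; exact ⟨hs.1, fun h => hs.2 (Set.mem_insert_iff.mpr (Or.inr h))⟩)

lemma adm_erase (S : FockIndex) (k : ℤ) : Admissible (S.1 \ {k}) := by
  constructor
  · exact S.2.1.subset (by intro s hs; exact ⟨hs.1.1, hs.2⟩)
  · apply Set.Finite.subset (S.2.2.union (Set.finite_singleton k))
    rintro s ⟨hneg, hs⟩
    by_cases h : s = k
    · exact Or.inr h
    · exact Or.inl ⟨hneg, fun hS => hs ⟨hS, h⟩⟩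

/-- The creation operator `ψ_k` : exterior multiplication by `k`,
`ψ_k v_S = (−1)^{#{s ∈ S : s > k}} v_{S ∪ {k}}` if `k ∉ S`, and `0` otherwise. -/
def psi (k : ℤ) : Fock →ₗ[ℝ] Fock :=
  Finsupp.lift Fock ℝ FockIndex fun S =>
    if k ∈ S.1 then 0
    else ((-1 : ℝ) ^ signCount S k) • vbasis ⟨insert k S.1, adm_insert S k⟩

/-- The annihilation operator `ψ*_k`, the adjoint of `ψ_k` with respect to the inner
product making `{v_S}` orthonormal:
`ψ*_k v_S = (−1)^{#{s ∈ S : s > k}} v_{S \ {k}}` if `k ∈ S`, and `0` otherwise. -/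
def psiStar (k : ℤ) : Fock →ₗ[ℝ] Fock :=
  Finsupp.lift Fock ℝ FockIndex fun S =>
    if k ∈ S.1 then ((-1 : ℝ) ^ signCount S k) • vbasis ⟨S.1 \ {k}, adm_erase S k⟩
    else 0
/-- A finite set of `k` containing all indices for which `ψ_{k−n} ψ*_k v_S ≠ 0`
(i.e. all `k ∈ S` with `k − n ∉ S`): such a `k` lies in `S \ ℤ'_{<0}` if `k ≥ 0`, in
`(ℤ'_{<0} \ S) + n` if `k < 0` and `k − n < 0`, and in `[n, −1]` if `k < 0 ≤ k − n`. -/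
def contribSet (S : FockIndex) (n : ℤ) : Finset ℤ :=
  S.2.1.toFinset ∪ S.2.2.toFinset.image (· + n) ∪ Finset.Icc n (-1)

/-- The operator `α_n = ∑_{k ∈ ℤ'} ψ_{k−n} ψ*_k` (`n ≠ 0`); on each basis vector only
finitely many terms act nontrivially, so it is defined by the finite sum over
`contribSet S n` (all other terms vanish). -/
def alpha (n : ℤ) : Fock →ₗ[ℝ] Fock :=
  Finsupp.lift Fock ℝ FockIndex fun S =>
    ∑ k ∈ contribSet S n, psi (k - n) (psiStar k (vbasis S))

section Helpers

lemma fockindex_ext {S T : FockIndex} (h : S.1 = T.1) : S = T := Subtype.ext h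

lemma vbasis_congr {S T : FockIndex} (h : S.1 = T.1) : vbasis S = vbasis T := by
  rw [fockindex_ext h]

/-- insert -/
def Sins (S : FockIndex) (a : ℤ) : FockIndex := ⟨insert a S.1, adm_insert S a⟩
/-- delete -/
def Sdel (S : FockIndex) (a : ℤ) : FockIndex := ⟨S.1 \ {a}, adm_erase S a⟩

lemma lift_single (f : FockIndex → Fock) (S : FockIndex) :
    Finsupp.lift Fock ℝ FockIndex f (vbasis S) = f S := by
  simp [vbasis, Finsupp.lift_apply, Finsupp.sum_single_index]

lemma psi_vbasis_of_mem {k : ℤ} {S : FockIndex} (h : k ∈ S.1) : psi k (vbasis S) = 0 := by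
  rw [psi, lift_single, if_pos h]

lemma psi_vbasis_of_not_mem {k : ℤ} {S : FockIndex} (h : k ∉ S.1) :
    psi k (vbasis S) = ((-1 : ℝ) ^ signCount S k) • vbasis (Sins S k) := by
  rw [psi, lift_single, if_neg h]; rfl

lemma psiStar_vbasis_of_mem {k : ℤ} {S : FockIndex} (h : k ∈ S.1) :
    psiStar k (vbasis S) = ((-1 : ℝ) ^ signCount S k) • vbasis (Sdel S k) := by
  rw [psiStar, lift_single, if_pos h]; rfl

lemma psiStar_vbasis_of_not_mem {k : ℤ} {S : FockIndex} (h : k ∉ S.1) :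
    psiStar k (vbasis S) = 0 := by
  rw [psiStar, lift_single, if_neg h]

lemma fock_ext {f g : Fock →ₗ[ℝ] Fock} (h : ∀ S, f (vbasis S) = g (vbasis S)) : f = g := by
  refine Finsupp.lhom_ext fun S r => ?_
  have hr : (Finsupp.single S r : Fock) = r • vbasis S := by
    simp [vbasis, Finsupp.smul_single]
  rw [hr, map_smul, map_smul, h S]

lemma signCount_insert (S : FockIndex) {a : ℤ} (ha : a ∉ S.1) (b : ℤ) :
    signCount (Sins S a) b = signCount S b + if b < a then 1 else 0 := by
  unfold signCount
  split_ifs with h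
  · have he : (finite_gt (Sins S a) b).toFinset = insert a (finite_gt S b).toFinset := by
      ext x
      simp only [Set.Finite.mem_toFinset, Finset.mem_insert, Sins, Set.mem_inter_iff,
        Set.mem_insert_iff, Set.mem_Ioi]
      constructor
      · rintro ⟨rfl | hx, hxb⟩
        · exact Or.inl rfl
        · exact Or.inr ⟨hx, hxb⟩
      · rintro (rfl | ⟨hx, hxb⟩)
        · exact ⟨Or.inl rfl, h⟩
        · exact ⟨Or.inr hx, hxb⟩
    have hna : a ∉ (finite_gt S b).toFinset := by
      simp only [Set.Finite.mem_toFinset]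
      exact fun hc => ha hc.1
    rw [he, Finset.card_insert_of_notMem hna]
  · have he : (finite_gt (Sins S a) b).toFinset = (finite_gt S b).toFinset := by
      ext x
      simp only [Set.Finite.mem_toFinset, Sins, Set.mem_inter_iff, Set.mem_insert_iff,
        Set.mem_Ioi]
      constructor
      · rintro ⟨rfl | hx, hxb⟩
        · exact absurd hxb h
        · exact ⟨hx, hxb⟩
      · rintro ⟨hx, hxb⟩; exact ⟨Or.inr hx, hxb⟩
    rw [he, Nat.add_zero]

lemma signCount_erase (S : FockIndex) {a : ℤ} (ha : a ∈ S.1) (b : ℤ) :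
    signCount S b = signCount (Sdel S a) b + if b < a then 1 else 0 := by
  unfold signCount
  split_ifs with h
  · have he : (finite_gt S b).toFinset = insert a (finite_gt (Sdel S a) b).toFinset := by
      ext x
      simp only [Set.Finite.mem_toFinset, Finset.mem_insert, Sdel, Set.mem_inter_iff,
        Set.mem_diff, Set.mem_singleton_iff, Set.mem_Ioi]
      constructor
      · rintro ⟨hx, hxb⟩
        by_cases hxa : x = a
        · exact Or.inl hxa
        · exact Or.inr ⟨⟨hx, hxa⟩, hxb⟩
      · rintro (rfl | ⟨⟨hx, _⟩, hxb⟩)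
        · exact ⟨ha, h⟩
        · exact ⟨hx, hxb⟩
    have hna : a ∉ (finite_gt (Sdel S a) b).toFinset := by
      simp only [Set.Finite.mem_toFinset]
      exact fun hc => hc.1.2 rfl
    rw [he, Finset.card_insert_of_notMem hna]
  · have he : (finite_gt S b).toFinset = (finite_gt (Sdel S a) b).toFinset := by
      ext x
      simp only [Set.Finite.mem_toFinset, Sdel, Set.mem_inter_iff, Set.mem_diff,
        Set.mem_singleton_iff, Set.mem_Ioi]
      constructor
      · rintro ⟨hx, hxb⟩
        refine ⟨⟨hx, ?_⟩, hxb⟩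
        rintro rfl; exact h hxb
      · rintro ⟨⟨hx, _⟩, hxb⟩; exact ⟨hx, hxb⟩
    rw [he, Nat.add_zero]

end Helpers
section CAR

lemma mem_Sins {x a : ℤ} {S : FockIndex} : x ∈ (Sins S a).1 ↔ x = a ∨ x ∈ S.1 :=
  Set.mem_insert_iff

lemma mem_Sdel {x a : ℤ} {S : FockIndex} : x ∈ (Sdel S a).1 ↔ x ∈ S.1 ∧ x ≠ a :=
  Set.mem_diff_singleton

lemma neg_one_pow_mul_self (c : ℕ) : ((-1 : ℝ) ^ c) * ((-1) ^ c) = 1 := by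
  rw [← pow_add]
  exact Even.neg_one_pow ⟨c, rfl⟩

lemma neg_one_pow_parity {c d : ℕ} (h : (c + d) % 2 = 1) : ((-1 : ℝ) ^ c) = -((-1) ^ d) := by
  have h1 : ((-1 : ℝ)) ^ (c + d) = -1 := Odd.neg_one_pow (Nat.odd_iff.mpr h)
  calc ((-1 : ℝ) ^ c) = (-1) ^ c * ((-1) ^ d * (-1) ^ d) := by
        rw [neg_one_pow_mul_self, mul_one]
    _ = ((-1) ^ (c + d)) * (-1) ^ d := by rw [pow_add]; ring
    _ = -((-1) ^ d) := by rw [h1]; ring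

/-- ψ_a ψ*_b + ψ*_b ψ_a = δ_{ab} -/
lemma car_mixed (a b : ℤ) :
    psi a ∘ₗ psiStar b + psiStar b ∘ₗ psi a
      = if a = b then (LinearMap.id : Fock →ₗ[ℝ] Fock) else 0 := by
  apply fock_ext; intro S
  simp only [LinearMap.add_apply, LinearMap.comp_apply]
  by_cases hb : b ∈ S.1
  · by_cases ha : a ∈ S.1
    · by_cases hab : a = b
      · subst hab
        rw [psi_vbasis_of_mem ha, map_zero, add_zero, psiStar_vbasis_of_mem hb, map_smul,
          psi_vbasis_of_not_mem (show a ∉ (Sdel S a).1 by simp [mem_Sdel]), if_pos rfl]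
        have hc := signCount_erase S ha a
        rw [if_neg (lt_irrefl a), Nat.add_zero] at hc
        rw [smul_smul, ← hc, neg_one_pow_mul_self, one_smul, LinearMap.id_apply]
        exact vbasis_congr (by
          show insert a (S.1 \ {a}) = S.1
          rw [Set.insert_diff_singleton, Set.insert_eq_self.mpr ha])
      · rw [psi_vbasis_of_mem ha, map_zero, add_zero, psiStar_vbasis_of_mem hb, map_smul,
          psi_vbasis_of_mem (show a ∈ (Sdel S b).1 from mem_Sdel.mpr ⟨ha, hab⟩),
          smul_zero, if_neg hab]
        rfl
    · have hab : a ≠ b := fun h => ha (by rwa [h])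
      rw [if_neg hab, psiStar_vbasis_of_mem hb, map_smul,
        psi_vbasis_of_not_mem (show a ∉ (Sdel S b).1 from fun h => ha (mem_Sdel.mp h).1),
        psi_vbasis_of_not_mem ha, map_smul,
        psiStar_vbasis_of_mem (show b ∈ (Sins S a).1 from mem_Sins.mpr (Or.inr hb)),
        smul_smul, smul_smul]
      have e1 : vbasis (Sins (Sdel S b) a) = vbasis (Sdel (Sins S a) b) := by
        apply vbasis_congr
        show insert a (S.1 \ {b}) = insert a S.1 \ {b}
        rw [Set.insert_diff_of_notMem]
        simp [hab]
      rw [e1, ← add_smul, ← pow_add, ← pow_add]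
      have h1 := signCount_erase S hb a
      have h2 := signCount_insert S ha b
      have key : ((-1 : ℝ) ^ (signCount S b + signCount (Sdel S b) a))
          = -((-1) ^ (signCount S a + signCount (Sins S a) b)) := by
        apply neg_one_pow_parity
        rcases lt_or_gt_of_ne hab with h | h
        · rw [if_pos h] at h1; rw [if_neg (not_lt.mpr (le_of_lt h))] at h2; omega
        · rw [if_neg (not_lt.mpr (le_of_lt h))] at h1; rw [if_pos h] at h2; omega
      rw [key, neg_add_cancel, zero_smul]
      rfl
  · rw [psiStar_vbasis_of_not_mem hb, map_zero, zero_add]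
    by_cases ha : a ∈ S.1
    · rw [psi_vbasis_of_mem ha, map_zero, if_neg (fun h => hb (by rwa [← h]))]; rfl
    · rw [psi_vbasis_of_not_mem ha, map_smul]
      by_cases hab : a = b
      · subst hab
        rw [psiStar_vbasis_of_mem (show a ∈ (Sins S a).1 from mem_Sins.mpr (Or.inl rfl)),
          smul_smul, if_pos rfl]
        have hc := signCount_insert S ha a
        rw [if_neg (lt_irrefl a), Nat.add_zero] at hc
        rw [hc, neg_one_pow_mul_self, one_smul, LinearMap.id_apply]
        exact vbasis_congr (Set.insert_diff_self_of_notMem ha)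
      · rw [psiStar_vbasis_of_not_mem
          (show b ∉ (Sins S a).1 by
            rw [mem_Sins]; rintro (h | h); exact hab h.symm; exact hb h),
          smul_zero, if_neg hab]
        rfl

/-- ψ_a ψ_c = −ψ_c ψ_a -/
lemma car_psi (a c : ℤ) : psi a ∘ₗ psi c = -(psi c ∘ₗ psi a) := by
  apply fock_ext; intro S
  simp only [LinearMap.comp_apply, LinearMap.neg_apply]
  by_cases hac : a = c
  · subst hac
    by_cases ha : a ∈ S.1
    · simp [psi_vbasis_of_mem ha]
    · simp [psi_vbasis_of_not_mem ha, map_smul,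
        psi_vbasis_of_mem (show a ∈ (Sins S a).1 from mem_Sins.mpr (Or.inl rfl))]
  · by_cases hc : c ∈ S.1
    · by_cases ha : a ∈ S.1
      · simp [psi_vbasis_of_mem ha, psi_vbasis_of_mem hc]
      · simp [psi_vbasis_of_mem hc, psi_vbasis_of_not_mem ha,
          psi_vbasis_of_mem (show c ∈ (Sins S a).1 from mem_Sins.mpr (Or.inr hc))]
    · by_cases ha : a ∈ S.1
      · simp [psi_vbasis_of_mem ha, psi_vbasis_of_not_mem hc,
          psi_vbasis_of_mem (show a ∈ (Sins S c).1 from mem_Sins.mpr (Or.inr ha))]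
      · rw [psi_vbasis_of_not_mem hc, psi_vbasis_of_not_mem ha, map_smul, map_smul,
          psi_vbasis_of_not_mem (show a ∉ (Sins S c).1 by
            rw [mem_Sins]; rintro (h | h); exact hac h; exact ha h),
          psi_vbasis_of_not_mem (show c ∉ (Sins S a).1 by
            rw [mem_Sins]; rintro (h | h); exact hac h.symm; exact hc h),
          smul_smul, smul_smul]
        have e1 : vbasis (Sins (Sins S c) a) = vbasis (Sins (Sins S a) c) :=
          vbasis_congr (Set.insert_comm a c S.1)
        rw [e1, ← neg_smul]
        congr 1
        rw [← pow_add, ← pow_add]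
        have h1 := signCount_insert S hc a
        have h2 := signCount_insert S ha c
        apply neg_one_pow_parity
        rcases lt_or_gt_of_ne hac with h | h
        · rw [if_pos h] at h1; rw [if_neg (not_lt.mpr (le_of_lt h))] at h2; omega
        · rw [if_neg (not_lt.mpr (le_of_lt h))] at h1; rw [if_pos h] at h2; omega

/-- ψ*_a ψ*_c = −ψ*_c ψ*_a -/
lemma car_star (a c : ℤ) : psiStar a ∘ₗ psiStar c = -(psiStar c ∘ₗ psiStar a) := by
  apply fock_ext; intro S
  simp only [LinearMap.comp_apply, LinearMap.neg_apply]
  by_cases hac : a = c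
  · subst hac
    by_cases ha : a ∈ S.1
    · simp [psiStar_vbasis_of_mem ha,
        psiStar_vbasis_of_not_mem (show a ∉ (Sdel S a).1 by simp [mem_Sdel])]
    · simp [psiStar_vbasis_of_not_mem ha]
  · by_cases hc : c ∈ S.1
    · by_cases ha : a ∈ S.1
      · rw [psiStar_vbasis_of_mem hc, psiStar_vbasis_of_mem ha, map_smul, map_smul,
          psiStar_vbasis_of_mem (show a ∈ (Sdel S c).1 from mem_Sdel.mpr ⟨ha, hac⟩),
          psiStar_vbasis_of_mem
            (show c ∈ (Sdel S a).1 from mem_Sdel.mpr ⟨hc, fun h => hac h.symm⟩),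
          smul_smul, smul_smul]
        have e1 : vbasis (Sdel (Sdel S c) a) = vbasis (Sdel (Sdel S a) c) :=
          vbasis_congr (Set.diff_diff_comm)
        rw [e1, ← neg_smul]
        congr 1
        rw [← pow_add, ← pow_add]
        have h1 := signCount_erase S hc a
        have h2 := signCount_erase S ha c
        apply neg_one_pow_parity
        rcases lt_or_gt_of_ne hac with h | h
        · rw [if_pos h] at h1; rw [if_neg (not_lt.mpr (le_of_lt h))] at h2; omega
        · rw [if_neg (not_lt.mpr (le_of_lt h))] at h1; rw [if_pos h] at h2; omega
      · rw [psiStar_vbasis_of_not_mem ha, map_zero, psiStar_vbasis_of_mem hc, map_smul,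
          psiStar_vbasis_of_not_mem
            (show a ∉ (Sdel S c).1 from fun h => ha (mem_Sdel.mp h).1),
          smul_zero, neg_zero]
    · by_cases ha : a ∈ S.1
      · rw [psiStar_vbasis_of_not_mem hc, map_zero, psiStar_vbasis_of_mem ha,
          map_smul,
          psiStar_vbasis_of_not_mem
            (show c ∉ (Sdel S a).1 from fun h => hc (mem_Sdel.mp h).1),
          smul_zero, neg_zero]
      · rw [psiStar_vbasis_of_not_mem hc, psiStar_vbasis_of_not_mem ha, map_zero, map_zero,
          neg_zero]

end CAR
section PP

/-- `PP a b = ψ_a ψ*_b`. -/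
def PP (a b : ℤ) : Fock →ₗ[ℝ] Fock := psi a ∘ₗ psiStar b

lemma PP_apply (a b : ℤ) (x : Fock) : PP a b x = psi a (psiStar b x) := rfl

lemma car_mixed_apply (a b : ℤ) (x : Fock) :
    psi a (psiStar b x) + psiStar b (psi a x) = if a = b then x else 0 := by
  have h := LinearMap.congr_fun (car_mixed a b) x
  simp only [LinearMap.add_apply, LinearMap.comp_apply] at h
  rw [h]
  split_ifs <;> simp

lemma car_psi_apply (a c : ℤ) (x : Fock) : psi a (psi c x) = -psi c (psi a x) := by
  have h := LinearMap.congr_fun (car_psi a c) x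
  simpa using h

lemma car_star_apply (a c : ℤ) (x : Fock) :
    psiStar a (psiStar c x) = -psiStar c (psiStar a x) := by
  have h := LinearMap.congr_fun (car_star a c) x
  simpa using h

lemma PP_comm_apply (a b c d : ℤ) (x : Fock) :
    PP a b (PP c d x) - PP c d (PP a b x)
      = (if c = b then PP a d x else 0) - (if a = d then PP c b x else 0) := by
  simp only [PP_apply]
  have e1 : psiStar b (psi c (psiStar d x))
      = (if c = b then psiStar d x else 0) - psi c (psiStar b (psiStar d x)) :=
    eq_sub_of_add_eq' (car_mixed_apply c b _)
  have e2 : psiStar b (psiStar d x) = -psiStar d (psiStar b x) := car_star_apply b d x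
  have e4 : psi a (psiStar d (psiStar b x))
      = (if a = d then psiStar b x else 0) - psiStar d (psi a (psiStar b x)) :=
    eq_sub_of_add_eq (car_mixed_apply a d _)
  rw [e1, map_sub, e2, map_neg, map_neg, car_psi_apply a c, neg_neg, e4,
    apply_ite (psi a), map_zero, map_sub]
  rw [apply_ite (psi c), map_zero]
  abel

end PP
section Trunc

/-- the index obtained from `S` by moving `k` to `k − n`. -/
def moveIdx (S : FockIndex) (k n : ℤ) : FockIndex := Sins (Sdel S k) (k - n)

lemma PP_vbasis_eq_zero {S : FockIndex} {k n : ℤ} (hn : n ≠ 0)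
    (h : ¬(k ∈ S.1 ∧ k - n ∉ S.1)) : PP (k - n) k (vbasis S) = 0 := by
  push_neg at h
  by_cases hk : k ∈ S.1
  · have hkn : k - n ∈ S.1 := h hk
    rw [PP_apply, psiStar_vbasis_of_mem hk, map_smul,
      psi_vbasis_of_mem (show k - n ∈ (Sdel S k).1 from
        mem_Sdel.mpr ⟨hkn, fun hc => hn (by omega)⟩), smul_zero]
  · rw [PP_apply, psiStar_vbasis_of_not_mem hk, map_zero]

lemma PP_vbasis_of_contrib {S : FockIndex} {k n : ℤ} (h1 : k ∈ S.1) (h2 : k - n ∉ S.1) :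
    PP (k - n) k (vbasis S)
      = ((-1 : ℝ) ^ (signCount S k + signCount (Sdel S k) (k - n))) • vbasis (moveIdx S k n) := by
  rw [PP_apply, psiStar_vbasis_of_mem h1, map_smul,
    psi_vbasis_of_not_mem (show k - n ∉ (Sdel S k).1 from fun hc => h2 (mem_Sdel.mp hc).1),
    smul_smul, pow_add, moveIdx]

lemma contrib_mem {S : FockIndex} {k n : ℤ} (h1 : k ∈ S.1) (h2 : k - n ∉ S.1) :
    k ∈ contribSet S n := by
  unfold contribSet
  simp only [Finset.mem_union, Set.Finite.mem_toFinset, Set.mem_diff, Set.mem_setOf_eq,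
    Finset.mem_image, Finset.mem_Icc]
  rcases le_or_gt 0 k with hk | hk
  · exact Or.inl (Or.inl ⟨h1, by omega⟩)
  · rcases lt_or_ge (k - n) 0 with hkn | hkn
    · exact Or.inl (Or.inr ⟨k - n, ⟨hkn, h2⟩, by omega⟩)
    · exact Or.inr ⟨by omega, by omega⟩

lemma PP_vbasis_eq_zero_of_not_contrib {S : FockIndex} {k n : ℤ} (hn : n ≠ 0)
    (h : k ∉ contribSet S n) : PP (k - n) k (vbasis S) = 0 :=
  PP_vbasis_eq_zero hn (fun hc => h (contrib_mem hc.1 hc.2))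

lemma alpha_trunc {n : ℤ} (hn : n ≠ 0) (S : FockIndex) {T : Finset ℤ}
    (hT : contribSet S n ⊆ T) :
    alpha n (vbasis S) = ∑ k ∈ T, PP (k - n) k (vbasis S) := by
  have h0 : alpha n (vbasis S) = ∑ k ∈ contribSet S n, PP (k - n) k (vbasis S) := by
    rw [alpha, lift_single]
    rfl
  rw [h0]
  exact Finset.sum_subset hT (fun k _ hk => PP_vbasis_eq_zero_of_not_contrib hn hk)

lemma alpha_PP_trunc {m n : ℤ} (hm : m ≠ 0) (hn : n ≠ 0) (S : FockIndex) (k : ℤ)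
    {T : Finset ℤ} (hT : contribSet (moveIdx S k n) m ⊆ T) :
    alpha m (PP (k - n) k (vbasis S)) = ∑ l ∈ T, PP (l - m) l (PP (k - n) k (vbasis S)) := by
  by_cases h : k ∈ S.1 ∧ k - n ∉ S.1
  · rw [PP_vbasis_of_contrib h.1 h.2, map_smul, alpha_trunc hm (moveIdx S k n) hT,
      Finset.smul_sum]
    exact Finset.sum_congr rfl (fun l _ => (map_smul _ _ _).symm)
  · rw [PP_vbasis_eq_zero hn h, map_zero]
    exact (Finset.sum_eq_zero (fun l _ => by rw [map_zero])).symm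

lemma comp_trunc {m n : ℤ} (hm : m ≠ 0) (hn : n ≠ 0) (S : FockIndex) {T : Finset ℤ}
    (h1 : contribSet S n ⊆ T)
    (h2 : ∀ k, k ∈ S.1 → k - n ∉ S.1 → contribSet (moveIdx S k n) m ⊆ T) :
    alpha m (alpha n (vbasis S))
      = ∑ k ∈ T, ∑ l ∈ T, PP (l - m) l (PP (k - n) k (vbasis S)) := by
  rw [alpha_trunc hn S h1, map_sum]
  refine Finset.sum_congr rfl (fun k _ => ?_)
  by_cases hk : k ∈ S.1 ∧ k - n ∉ S.1
  · exact alpha_PP_trunc hm hn S k (h2 k hk.1 hk.2)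
  · rw [PP_vbasis_eq_zero hn hk, map_zero]
    exact (Finset.sum_eq_zero (fun l _ => by rw [map_zero])).symm

lemma PPkk (k : ℤ) (S : FockIndex) :
    PP k k (vbasis S) = if k ∈ S.1 then vbasis S else 0 := by
  by_cases hk : k ∈ S.1
  · rw [if_pos hk, PP_apply, psiStar_vbasis_of_mem hk, map_smul,
      psi_vbasis_of_not_mem (show k ∉ (Sdel S k).1 by simp [mem_Sdel]), smul_smul]
    have hc := signCount_erase S hk k
    rw [if_neg (lt_irrefl k), Nat.add_zero] at hc
    rw [← hc, neg_one_pow_mul_self, one_smul]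
    exact vbasis_congr (by
      show insert k (S.1 \ {k}) = S.1
      rw [Set.insert_diff_singleton, Set.insert_eq_self.mpr hk])
  · rw [if_neg hk, PP_apply, psiStar_vbasis_of_not_mem hk, map_zero]

end Trunc
section Main

lemma count_key (S : FockIndex) (m N₀ N : ℤ) (hm : m ≠ 0) (h0 : 0 ≤ N₀)
    (hN : N₀ + (m.natAbs : ℤ) ≤ N)
    (hlow : ∀ k : ℤ, k < -N₀ → k ∈ S.1) (hhigh : ∀ k : ℤ, N₀ < k → k ∉ S.1) :
    (((Finset.Icc (-N) N).filter
        (fun k => k + m ∈ Finset.Icc (-N) N ∧ k ∈ S.1)).card : ℤ)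
      - (((Finset.Icc (-N) N).filter
        (fun k => k - m ∈ Finset.Icc (-N) N ∧ k ∈ S.1)).card : ℤ) = m := by
  rcases lt_or_gt_of_ne hm with hm' | hm'
  · -- m < 0
    have e1 : (Finset.Icc (-N) N).filter
          (fun k => k + m ∈ Finset.Icc (-N) N ∧ k ∈ S.1)
        = (Finset.Icc (-N - m) N).filter (fun k => k ∈ S.1) := by
      ext k
      simp only [Finset.mem_filter, Finset.mem_Icc]
      constructor
      · rintro ⟨h1, h2, h3⟩; exact ⟨⟨by omega, by omega⟩, h3⟩
      · rintro ⟨⟨h1, h2⟩, h3⟩; exact ⟨⟨by omega, by omega⟩, ⟨by omega, by omega⟩, h3⟩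
    have e2 : (Finset.Icc (-N) N).filter
          (fun k => k - m ∈ Finset.Icc (-N) N ∧ k ∈ S.1)
        = (Finset.Icc (-N) (N + m)).filter (fun k => k ∈ S.1) := by
      ext k
      simp only [Finset.mem_filter, Finset.mem_Icc]
      constructor
      · rintro ⟨h1, h2, h3⟩; exact ⟨⟨by omega, by omega⟩, h3⟩
      · rintro ⟨⟨h1, h2⟩, h3⟩; exact ⟨⟨by omega, by omega⟩, ⟨by omega, by omega⟩, h3⟩
    have s1 : Finset.Icc (-N - m) N
        = Finset.Icc (-N - m) (N + m) ∪ Finset.Ioc (N + m) N := by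
      ext k
      simp only [Finset.mem_union, Finset.mem_Icc, Finset.mem_Ioc]
      omega
    have s2 : Finset.Icc (-N) (N + m)
        = Finset.Ico (-N) (-N - m) ∪ Finset.Icc (-N - m) (N + m) := by
      ext k
      simp only [Finset.mem_union, Finset.mem_Icc, Finset.mem_Ico]
      omega
    have hempty : (Finset.Ioc (N + m) N).filter (fun k => k ∈ S.1) = ∅ :=
      Finset.filter_false_of_mem (fun k hk => by
        simp only [Finset.mem_Ioc] at hk
        exact hhigh k (by omega))
    have hfull : (Finset.Ico (-N) (-N - m)).filter (fun k => k ∈ S.1)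
        = Finset.Ico (-N) (-N - m) :=
      Finset.filter_true_of_mem (fun k hk => by
        simp only [Finset.mem_Ico] at hk
        exact hlow k (by omega))
    have hdisj : Disjoint (Finset.Ico (-N) (-N - m))
        ((Finset.Icc (-N - m) (N + m)).filter (fun k => k ∈ S.1)) := by
      rw [Finset.disjoint_left]
      intro k hk1 hk2
      simp only [Finset.mem_Ico] at hk1
      simp only [Finset.mem_filter, Finset.mem_Icc] at hk2
      omega
    rw [e1, e2, s1, s2, Finset.filter_union, Finset.filter_union, hempty, hfull,
      Finset.union_empty, Finset.card_union_of_disjoint hdisj, Int.card_Ico]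
    omega
  · -- m > 0
    have e1 : (Finset.Icc (-N) N).filter
          (fun k => k + m ∈ Finset.Icc (-N) N ∧ k ∈ S.1)
        = (Finset.Icc (-N) (N - m)).filter (fun k => k ∈ S.1) := by
      ext k
      simp only [Finset.mem_filter, Finset.mem_Icc]
      constructor
      · rintro ⟨h1, h2, h3⟩; exact ⟨⟨by omega, by omega⟩, h3⟩
      · rintro ⟨⟨h1, h2⟩, h3⟩; exact ⟨⟨by omega, by omega⟩, ⟨by omega, by omega⟩, h3⟩
    have e2 : (Finset.Icc (-N) N).filter
          (fun k => k - m ∈ Finset.Icc (-N) N ∧ k ∈ S.1)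
        = (Finset.Icc (-N + m) N).filter (fun k => k ∈ S.1) := by
      ext k
      simp only [Finset.mem_filter, Finset.mem_Icc]
      constructor
      · rintro ⟨h1, h2, h3⟩; exact ⟨⟨by omega, by omega⟩, h3⟩
      · rintro ⟨⟨h1, h2⟩, h3⟩; exact ⟨⟨by omega, by omega⟩, ⟨by omega, by omega⟩, h3⟩
    have s1 : Finset.Icc (-N) (N - m)
        = Finset.Ico (-N) (-N + m) ∪ Finset.Icc (-N + m) (N - m) := by
      ext k
      simp only [Finset.mem_union, Finset.mem_Icc, Finset.mem_Ico]
      omega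
    have s2 : Finset.Icc (-N + m) N
        = Finset.Icc (-N + m) (N - m) ∪ Finset.Ioc (N - m) N := by
      ext k
      simp only [Finset.mem_union, Finset.mem_Icc, Finset.mem_Ioc]
      omega
    have hempty : (Finset.Ioc (N - m) N).filter (fun k => k ∈ S.1) = ∅ :=
      Finset.filter_false_of_mem (fun k hk => by
        simp only [Finset.mem_Ioc] at hk
        exact hhigh k (by omega))
    have hfull : (Finset.Ico (-N) (-N + m)).filter (fun k => k ∈ S.1)
        = Finset.Ico (-N) (-N + m) :=
      Finset.filter_true_of_mem (fun k hk => by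
        simp only [Finset.mem_Ico] at hk
        exact hlow k (by omega))
    have hdisj : Disjoint (Finset.Ico (-N) (-N + m))
        ((Finset.Icc (-N + m) (N - m)).filter (fun k => k ∈ S.1)) := by
      rw [Finset.disjoint_left]
      intro k hk1 hk2
      simp only [Finset.mem_Ico] at hk1
      simp only [Finset.mem_filter, Finset.mem_Icc] at hk2
      omega
    rw [e1, e2, s1, s2, Finset.filter_union, Finset.filter_union, hempty, hfull,
      Finset.union_empty, Finset.card_union_of_disjoint hdisj, Int.card_Ico]
    omega

end Main
section Assemble

lemma comm_vbasis (m n : ℤ) (hm : m ≠ 0) (hn : n ≠ 0) (S : FockIndex) :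
    ∃ N₀ N : ℤ, 0 ≤ N₀ ∧ N₀ + (m.natAbs : ℤ) + (n.natAbs : ℤ) ≤ N ∧
      (∀ k : ℤ, k < -N₀ → k ∈ S.1) ∧ (∀ k : ℤ, N₀ < k → k ∉ S.1) ∧
      (∀ a ∈ contribSet S (n + m), -N₀ ≤ a ∧ a ≤ N₀) ∧
      (∀ a ∈ contribSet S (m + n), -N₀ ≤ a ∧ a ≤ N₀) ∧
      alpha m (alpha n (vbasis S)) - alpha n (alpha m (vbasis S))
        = (∑ k ∈ Finset.Icc (-N) N,
            if k - n ∈ Finset.Icc (-N) N then PP (k - n - m) k (vbasis S) else 0)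
          - (∑ k ∈ Finset.Icc (-N) N,
            if k - m ∈ Finset.Icc (-N) N then PP (k - m - n) k (vbasis S) else 0) := by
  classical
  set F : Finset ℤ := contribSet S n ∪ contribSet S m ∪ contribSet S (n + m)
      ∪ contribSet S (m + n) ∪ S.2.1.toFinset ∪ S.2.2.toFinset
      ∪ (contribSet S n).biUnion (fun k => contribSet (moveIdx S k n) m)
      ∪ (contribSet S m).biUnion (fun k => contribSet (moveIdx S k m) n) with hF
  set N₀ : ℤ := ((F.sup Int.natAbs : ℕ) : ℤ) with hN₀
  set N : ℤ := N₀ + (m.natAbs : ℤ) + (n.natAbs : ℤ) with hNdef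
  set T : Finset ℤ := Finset.Icc (-N) N with hT
  have hbF : ∀ a ∈ F, -N₀ ≤ a ∧ a ≤ N₀ := by
    intro a ha
    have h : a.natAbs ≤ F.sup Int.natAbs := Finset.le_sup ha
    rw [hN₀]
    omega
  have h0 : (0 : ℤ) ≤ N₀ := by rw [hN₀]; exact Int.ofNat_nonneg _
  have hA : ∀ a ∈ contribSet S n, a ∈ F := fun a ha => by
    rw [hF]; simp only [Finset.mem_union]
    exact Or.inl (Or.inl (Or.inl (Or.inl (Or.inl (Or.inl (Or.inl ha))))))
  have hB : ∀ a ∈ contribSet S m, a ∈ F := fun a ha => by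
    rw [hF]; simp only [Finset.mem_union]
    exact Or.inl (Or.inl (Or.inl (Or.inl (Or.inl (Or.inl (Or.inr ha))))))
  have hC : ∀ a ∈ contribSet S (n + m), a ∈ F := fun a ha => by
    rw [hF]; simp only [Finset.mem_union]
    exact Or.inl (Or.inl (Or.inl (Or.inl (Or.inl (Or.inr ha)))))
  have hD : ∀ a ∈ contribSet S (m + n), a ∈ F := fun a ha => by
    rw [hF]; simp only [Finset.mem_union]
    exact Or.inl (Or.inl (Or.inl (Or.inl (Or.inr ha))))
  have hE : ∀ a ∈ S.2.1.toFinset, a ∈ F := fun a ha => by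
    rw [hF]; simp only [Finset.mem_union]
    exact Or.inl (Or.inl (Or.inl (Or.inr ha)))
  have hG : ∀ a ∈ S.2.2.toFinset, a ∈ F := fun a ha => by
    rw [hF]; simp only [Finset.mem_union]
    exact Or.inl (Or.inl (Or.inr ha))
  have hH : ∀ k ∈ contribSet S n, ∀ a ∈ contribSet (moveIdx S k n) m, a ∈ F :=
    fun k hk a ha => by
      rw [hF]; simp only [Finset.mem_union, Finset.mem_biUnion]
      exact Or.inl (Or.inr ⟨k, hk, ha⟩)
  have hI : ∀ k ∈ contribSet S m, ∀ a ∈ contribSet (moveIdx S k m) n, a ∈ F :=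
    fun k hk a ha => by
      rw [hF]; simp only [Finset.mem_union, Finset.mem_biUnion]
      exact Or.inr ⟨k, hk, ha⟩
  have hlow : ∀ k : ℤ, k < -N₀ → k ∈ S.1 := by
    intro k hk
    by_contra hkS
    have hmem : k ∈ S.2.2.toFinset := by
      rw [Set.Finite.mem_toFinset]
      exact ⟨by simp only [Set.mem_setOf_eq]; omega, hkS⟩
    have := hbF k (hG k hmem)
    omega
  have hhigh : ∀ k : ℤ, N₀ < k → k ∉ S.1 := by
    intro k hk hkS
    have hmem : k ∈ S.2.1.toFinset := by
      rw [Set.Finite.mem_toFinset]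
      exact ⟨hkS, by simp only [Set.mem_setOf_eq]; omega⟩
    have := hbF k (hE k hmem)
    omega
  have hb1 : ∀ a ∈ contribSet S (n + m), -N₀ ≤ a ∧ a ≤ N₀ :=
    fun a ha => hbF a (hC a ha)
  have hb2 : ∀ a ∈ contribSet S (m + n), -N₀ ≤ a ∧ a ≤ N₀ :=
    fun a ha => hbF a (hD a ha)
  have hTn : contribSet S n ⊆ T := by
    intro a ha
    have := hbF a (hA a ha)
    rw [hT, Finset.mem_Icc]
    omega
  have hTm : contribSet S m ⊆ T := by
    intro a ha
    have := hbF a (hB a ha)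
    rw [hT, Finset.mem_Icc]
    omega
  have hmove_n : ∀ k, k ∈ S.1 → k - n ∉ S.1 → contribSet (moveIdx S k n) m ⊆ T := by
    intro k hk1 hk2 a ha
    have := hbF a (hH k (contrib_mem hk1 hk2) a ha)
    rw [hT, Finset.mem_Icc]
    omega
  have hmove_m : ∀ k, k ∈ S.1 → k - m ∉ S.1 → contribSet (moveIdx S k m) n ⊆ T := by
    intro k hk1 hk2 a ha
    have := hbF a (hI k (contrib_mem hk1 hk2) a ha)
    rw [hT, Finset.mem_Icc]
    omega
  refine ⟨N₀, N, h0, by omega, hlow, hhigh, hb1, hb2, ?_⟩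
  have hX : alpha m (alpha n (vbasis S))
      = ∑ k ∈ T, ∑ l ∈ T, PP (l - m) l (PP (k - n) k (vbasis S)) :=
    comp_trunc hm hn S hTn hmove_n
  have hY : alpha n (alpha m (vbasis S))
      = ∑ k ∈ T, ∑ l ∈ T, PP (k - n) k (PP (l - m) l (vbasis S)) := by
    rw [comp_trunc hn hm S hTm hmove_m]
    exact Finset.sum_comm
  rw [hX, hY, ← Finset.sum_sub_distrib]
  have step1 : ∀ k ∈ T,
      (∑ l ∈ T, PP (l - m) l (PP (k - n) k (vbasis S)))
        - (∑ l ∈ T, PP (k - n) k (PP (l - m) l (vbasis S)))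
      = (if k - n ∈ T then PP (k - n - m) k (vbasis S) else 0)
        - (∑ l ∈ T, if l - m = k then PP (k - n) l (vbasis S) else 0) := by
    intro k _
    rw [← Finset.sum_sub_distrib]
    have : ∀ l ∈ T,
        PP (l - m) l (PP (k - n) k (vbasis S)) - PP (k - n) k (PP (l - m) l (vbasis S))
        = (if k - n = l then PP (l - m) k (vbasis S) else 0)
          - (if l - m = k then PP (k - n) l (vbasis S) else 0) :=
      fun l _ => PP_comm_apply (l - m) l (k - n) k (vbasis S)
    rw [Finset.sum_congr rfl this, Finset.sum_sub_distrib]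
    congr 1
    rw [Finset.sum_ite_eq T (k - n) (fun l => PP (l - m) k (vbasis S))]
  rw [Finset.sum_congr rfl step1, Finset.sum_sub_distrib]
  congr 1
  rw [Finset.sum_comm]
  refine Finset.sum_congr rfl (fun l _ => ?_)
  exact Finset.sum_ite_eq T (l - m) (fun k => PP (k - n) l (vbasis S))

end Assemble
/-- the operators `α_n` satisfy the Heisenberg commutation relations
`α_m α_n − α_n α_m = m δ_{n,−m}` for `m, n ∈ ℤ \ {0}`. -/
theorem alpha_heisenberg (m n : ℤ) (hm : m ≠ 0) (hn : n ≠ 0) :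
    alpha m ∘ₗ alpha n - alpha n ∘ₗ alpha m
      = if n = -m then (m : ℝ) • (LinearMap.id : Fock →ₗ[ℝ] Fock) else 0 := by
  classical
  by_cases hnm : n = -m
  · subst hnm
    rw [if_pos rfl]
    apply fock_ext
    intro S
    obtain ⟨N₀, N, h0, hN, hlow, hhigh, hb1, hb2, heq⟩ := comm_vbasis m (-m) hm hn S
    simp only [LinearMap.sub_apply, LinearMap.comp_apply, LinearMap.smul_apply,
      LinearMap.id_apply]
    rw [heq]
    have e2 : ∀ k : ℤ, k - -m = k + m := fun k => by ring
    have e1 : ∀ k : ℤ, k + m - m = k := fun k => by ring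
    have e3 : ∀ k : ℤ, k - m + m = k := fun k => by ring
    simp only [e2, e1, e3, PPkk]
    have c1 : ∀ k ∈ Finset.Icc (-N) N,
        (if k + m ∈ Finset.Icc (-N) N then (if k ∈ S.1 then vbasis S else 0) else 0)
          = if (k + m ∈ Finset.Icc (-N) N ∧ k ∈ S.1) then vbasis S else 0 := by
      intro k _
      by_cases h1 : k + m ∈ Finset.Icc (-N) N <;> by_cases h2 : k ∈ S.1 <;>
        simp [h1, h2]
    have c2 : ∀ k ∈ Finset.Icc (-N) N,
        (if k - m ∈ Finset.Icc (-N) N then (if k ∈ S.1 then vbasis S else 0) else 0)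
          = if (k - m ∈ Finset.Icc (-N) N ∧ k ∈ S.1) then vbasis S else 0 := by
      intro k _
      by_cases h1 : k - m ∈ Finset.Icc (-N) N <;> by_cases h2 : k ∈ S.1 <;>
        simp [h1, h2]
    rw [Finset.sum_congr rfl c1, Finset.sum_congr rfl c2,
      ← Finset.sum_filter, ← Finset.sum_filter, Finset.sum_const, Finset.sum_const]
    have hcount := count_key S m N₀ N hm h0 (by omega) hlow hhigh
    set a1 := ((Finset.Icc (-N) N).filter
        (fun k => k + m ∈ Finset.Icc (-N) N ∧ k ∈ S.1)).card
    set a2 := ((Finset.Icc (-N) N).filter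
        (fun k => k - m ∈ Finset.Icc (-N) N ∧ k ∈ S.1)).card
    have r1 : a1 • vbasis S = ((a1 : ℝ)) • vbasis S := (Nat.cast_smul_eq_nsmul ℝ _ _).symm
    have r2 : a2 • vbasis S = ((a2 : ℝ)) • vbasis S := (Nat.cast_smul_eq_nsmul ℝ _ _).symm
    rw [r1, r2, ← sub_smul]
    congr 1
    have : ((a1 : ℤ) : ℝ) - ((a2 : ℤ) : ℝ) = ((m : ℤ) : ℝ) := by
      rw [← Int.cast_sub, hcount]
    push_cast at this ⊢
    linarith
  · rw [if_neg hnm]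
    apply fock_ext
    intro S
    obtain ⟨N₀, N, h0, hN, hlow, hhigh, hb1, hb2, heq⟩ := comm_vbasis m n hm hn S
    simp only [LinearMap.sub_apply, LinearMap.comp_apply, LinearMap.zero_apply]
    rw [heq, sub_eq_zero]
    have hmn0 : n + m ≠ 0 := by omega
    have key1 : ∀ k ∈ Finset.Icc (-N) N,
        (if k - n ∈ Finset.Icc (-N) N then PP (k - n - m) k (vbasis S) else 0)
          = PP (k - (n + m)) k (vbasis S) := by
      intro k hk
      by_cases hkT : k - n ∈ Finset.Icc (-N) N
      · rw [if_pos hkT, sub_sub]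
      · rw [if_neg hkT]
        symm
        apply PP_vbasis_eq_zero_of_not_contrib hmn0
        intro hc
        have := hb1 k hc
        rw [Finset.mem_Icc] at hkT
        omega
    have key2 : ∀ k ∈ Finset.Icc (-N) N,
        (if k - m ∈ Finset.Icc (-N) N then PP (k - m - n) k (vbasis S) else 0)
          = PP (k - (n + m)) k (vbasis S) := by
      intro k hk
      by_cases hkT : k - m ∈ Finset.Icc (-N) N
      · rw [if_pos hkT, sub_sub, add_comm m n]
      · rw [if_neg hkT]
        symm
        apply PP_vbasis_eq_zero_of_not_contrib hmn0
        intro hc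
        have := hb1 k hc
        rw [Finset.mem_Icc] at hkT
        omega
    rw [Finset.sum_congr rfl key1, Finset.sum_congr rfl key2]

end
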